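/- arXiv:1908.08155 — 6 statements merged into one kernel-verified Lean document; each statement's English description precedes it below -/
import Mathlib

section
/- Define the relative number of subuniverses of a finite nearlattice L with n elements as σ(L) = |Sub(L)| · 2^{8−n}, where Sub(L) is the set of subsets of L closed under the join operation and under the partial meet operation (where defined). If K is a subnearlattice of L (a nonempty subset closed under join and under the partial meet of L) viewed as a nearlattice with the restricted operations, and every subuniverse of the restriction of L's structure to K is a subuniverse of K's structure, then σ(K) ≥ σ(L). -/
/-- If `K` is a subnearlattice of a finite nearlattice `L` such that every
subuniverse of the restriction of `L`'s structure to `K` is a subuniverse of `K`'s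
own nearlattice structure, then the relative number of subuniverses of `K` is at
least that of `L`, where `σ(L) = |Sub L| · 2 ^ (8 - |L|)`. -/
theorem stmt8 {α : Type*} [SemilatticeSup α] [Fintype α] (K : Set α)
    (hK : K.Nonempty)
    (hsup : ∀ x ∈ K, ∀ y ∈ K, x ⊔ y ∈ K)
    (hinf : ∀ x ∈ K, ∀ y ∈ K, ∀ z : α, IsGLB {x, y} z → z ∈ K)
    (hcomp : ∀ X : Set α, X ⊆ K →
      ((∀ x ∈ X, ∀ y ∈ X, x ⊔ y ∈ X) ∧
       (∀ x ∈ X, ∀ y ∈ X, ∀ z : α, IsGLB {x, y} z → z ∈ X)) →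
      (∀ x ∈ X, ∀ y ∈ X, ∀ z ∈ K,
        (z ≤ x ∧ z ≤ y ∧ ∀ w ∈ K, w ≤ x → w ≤ y → w ≤ z) → z ∈ X)) :
    (Nat.card {X : Set α // X ⊆ K ∧ (∀ x ∈ X, ∀ y ∈ X, x ⊔ y ∈ X) ∧
        (∀ x ∈ X, ∀ y ∈ X, ∀ z ∈ K,
          (z ≤ x ∧ z ≤ y ∧ ∀ w ∈ K, w ≤ x → w ≤ y → w ≤ z) → z ∈ X)} : ℝ)
      * (2 : ℝ) ^ ((8 : ℤ) - (K.ncard : ℤ)) ≥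
    (Nat.card {X : Set α // (∀ x ∈ X, ∀ y ∈ X, x ⊔ y ∈ X) ∧
        (∀ x ∈ X, ∀ y ∈ X, ∀ z : α, IsGLB {x, y} z → z ∈ X)} : ℝ)
      * (2 : ℝ) ^ ((8 : ℤ) - (Fintype.card α : ℤ)) := by
  classical
  set SK := {X : Set α // X ⊆ K ∧ (∀ x ∈ X, ∀ y ∈ X, x ⊔ y ∈ X) ∧
        (∀ x ∈ X, ∀ y ∈ X, ∀ z ∈ K,
          (z ≤ x ∧ z ≤ y ∧ ∀ w ∈ K, w ≤ x → w ≤ y → w ≤ z) → z ∈ X)} with hSK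
  set SL := {X : Set α // (∀ x ∈ X, ∀ y ∈ X, x ⊔ y ∈ X) ∧
        (∀ x ∈ X, ∀ y ∈ X, ∀ z : α, IsGLB {x, y} z → z ∈ X)} with hSL
  set n := Fintype.card α with hn
  set k := K.ncard with hk
  have hkn : k ≤ n := by
    rw [hk, hn, ← Nat.card_eq_fintype_card, ← Set.ncard_univ α]
    exact Set.ncard_le_ncard (Set.subset_univ K) (Set.finite_univ)
  -- injective map from SL to SK × Set ↥Kᶜ
  have hmap : ∃ f : SL → SK × Set (↥(Kᶜ : Set α)), Function.Injective f := by
    refine ⟨fun X => ⟨⟨X.1 ∩ K, ?_⟩, {a | (a : α) ∈ X.1}⟩, ?_⟩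
    · refine ⟨Set.inter_subset_right, ?_, ?_⟩
      · intro x hx y hy
        exact ⟨X.2.1 x hx.1 y hy.1, hsup x hx.2 y hy.2⟩
      · refine hcomp (X.1 ∩ K) Set.inter_subset_right ⟨?_, ?_⟩
        · intro x hx y hy
          exact ⟨X.2.1 x hx.1 y hy.1, hsup x hx.2 y hy.2⟩
        · intro x hx y hy z hz
          exact ⟨X.2.2 x hx.1 y hy.1 z hz, hinf x hx.2 y hy.2 z hz⟩
    · intro X Y h
      have h1 : X.1 ∩ K = Y.1 ∩ K := congrArg (fun p => p.1.1) h
      have h2 : (fun X : SL => ({a : ↥(Kᶜ : Set α) | (a : α) ∈ X.1} : Set _)) X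
          = (fun X : SL => ({a : ↥(Kᶜ : Set α) | (a : α) ∈ X.1} : Set _)) Y :=
        congrArg Prod.snd h
      apply Subtype.ext
      ext a
      by_cases ha : a ∈ K
      · constructor
        · intro hx
          have : a ∈ Y.1 ∩ K := h1 ▸ (⟨hx, ha⟩ : a ∈ X.1 ∩ K)
          exact this.1
        · intro hy
          have : a ∈ X.1 ∩ K := h1.symm ▸ (⟨hy, ha⟩ : a ∈ Y.1 ∩ K)
          exact this.1
      · exact Set.ext_iff.mp h2 (⟨a, ha⟩ : (Kᶜ : Set α))
  obtain ⟨f, hf⟩ := hmap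
  have hcard : Nat.card SL ≤ Nat.card SK * 2 ^ (n - k) := by
    calc Nat.card SL ≤ Nat.card (SK × Set (↥(Kᶜ : Set α))) :=
          Nat.card_le_card_of_injective f hf
      _ = Nat.card SK * Nat.card (Set (↥(Kᶜ : Set α))) := Nat.card_prod _ _
      _ = Nat.card SK * 2 ^ (n - k) := by
          congr 1
          rw [Nat.card_eq_fintype_card, Fintype.card_set]
          congr 1
          rw [← Nat.card_eq_fintype_card, Nat.card_coe_set_eq]
          have hnc : K.ncard + Kᶜ.ncard = n := by
            rw [hn, ← Nat.card_eq_fintype_card]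
            exact Set.ncard_add_ncard_compl K
          omega
  -- now the real inequality
  have h2pos : (0 : ℝ) < (2 : ℝ) ^ ((8 : ℤ) - (n : ℤ)) := by positivity
  have hexp : (2 : ℝ) ^ ((8 : ℤ) - (k : ℤ)) =
      (2 : ℝ) ^ (n - k : ℕ) * (2 : ℝ) ^ ((8 : ℤ) - (n : ℤ)) := by
    rw [← zpow_natCast (2 : ℝ) (n - k), ← zpow_add₀ (by norm_num : (2:ℝ) ≠ 0)]
    congr 1
    have : ((n - k : ℕ) : ℤ) = (n : ℤ) - (k : ℤ) := by omega
    rw [this]; ring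
  rw [ge_iff_le, hexp, ← mul_assoc]
  apply mul_le_mul_of_nonneg_right _ (le_of_lt h2pos)
  calc (Nat.card SL : ℝ) ≤ ((Nat.card SK * 2 ^ (n - k) : ℕ) : ℝ) := by
        exact_mod_cast hcard
    _ = (Nat.card SK : ℝ) * (2 : ℝ) ^ (n - k : ℕ) := by push_cast; ring
end

section
/- Let L be a finite nearlattice in which all distinct minimal elements have common join m, let x_min be a minimal element, set M = ↑m and W(x_min) = ↑x_min \ M. Call v ∈ M \ {m} an x_min-entry if v covers some element of W(x_min). Suppose i is a minimal x_min-entry with x_min-anchor c (so c ∈ W(x_min) and c is covered by i). Then for every y ∈ L with m ≤ y < i, one has c ∧ y = c ∧ m (both meets exist since c, y ≥ x_min). -/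
/-- In a finite order, every element lies above some minimal element. -/
private lemma exists_min_le {α : Type*} [PartialOrder α] [Fintype α] (a : α) :
    ∃ p, IsMin p ∧ p ≤ a := by
  obtain ⟨p, hp, hmax⟩ := Set.Finite.exists_maximalFor (α := αᵒᵈ) id
    {x : α | x ≤ a} (Set.toFinite _) ⟨a, le_refl a⟩
  refine ⟨p, fun b hb => ?_, hp⟩
  exact (hmax (hb.trans hp) hb).ge

/-- Let all distinct minimal elements of a finite nearlattice have common join `m`,
let `x_min` be minimal, `i` a minimal `x_min`-entry with `x_min`-anchor `c`.
Then for every `y` with `m ≤ y < i`, the (defined) meets `c ∧ y` and `c ∧ m`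
coincide. -/
theorem stmt15 {α : Type*} [SemilatticeSup α] [Fintype α] (m : α)
    (hm : ∀ p q : α, IsMin p → IsMin q → p ≠ q → p ⊔ q = m)
    (xm : α) (hxm : IsMin xm) (i c : α)
    (hi : m ≤ i ∧ i ≠ m ∧ ∃ u, (xm ≤ u ∧ ¬ m ≤ u) ∧ u ⋖ i)
    (himin : ∀ v : α, (m ≤ v ∧ v ≠ m ∧ ∃ u, (xm ≤ u ∧ ¬ m ≤ u) ∧ u ⋖ v) → ¬ v < i)
    (hc : xm ≤ c ∧ ¬ m ≤ c) (hci : c ⋖ i) :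
    ∀ y : α, m ≤ y → y < i → ∃ z, IsGLB {c, y} z ∧ IsGLB {c, m} z := by
  classical
  -- xm ≤ m
  have hxmm : xm ≤ m := by
    by_cases hone : ∃ p, IsMin p ∧ p ≠ xm
    · obtain ⟨p, hp, hne⟩ := hone
      have := hm xm p hxm hp (Ne.symm hne)
      calc xm ≤ xm ⊔ p := le_sup_left
        _ = m := this
    · push_neg at hone
      obtain ⟨p, hp, hpm⟩ := exists_min_le m
      exact (hone p hp) ▸ hpm
  intro y hmy hyi
  -- the glb of {c, y} as the sup of all lower bounds
  set S : Finset α := Finset.univ.filter (fun w => w ≤ c ∧ w ≤ y) with hS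
  have hxmS : xm ∈ S := by
    simp only [hS, Finset.mem_filter, Finset.mem_univ, true_and]
    exact ⟨hc.1, le_trans hxmm hmy⟩
  have hSne : S.Nonempty := ⟨xm, hxmS⟩
  set z : α := S.sup' hSne id with hz
  have hzc : z ≤ c := Finset.sup'_le _ _ (fun w hw => by
    simp only [hS, Finset.mem_filter] at hw; exact hw.2.1)
  have hzy : z ≤ y := Finset.sup'_le _ _ (fun w hw => by
    simp only [hS, Finset.mem_filter] at hw; exact hw.2.2)
  have hlbz : ∀ w, w ≤ c → w ≤ y → w ≤ z := fun w h1 h2 =>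
    Finset.le_sup' (f := id) (by
      simp only [hS, Finset.mem_filter, Finset.mem_univ, true_and]; exact ⟨h1, h2⟩)
  have hglb1 : IsGLB {c, y} z := by
    constructor
    · rintro a (rfl | rfl); exacts [hzc, by simpa using hzy]
    · intro w hw
      exact hlbz w (hw (Set.mem_insert _ _)) (hw (Set.mem_insert_of_mem _ rfl))
  have hxmz : xm ≤ z := hlbz xm hc.1 (le_trans hxmm hmy)
  -- key claim : z ≤ m
  have hzm : z ≤ m := by
    by_contra hzm
    -- find a maximal element u with z ≤ u ≤ z ⊔ m and ¬ m ≤ u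
    obtain ⟨u, hu, humax⟩ := Set.Finite.exists_maximalFor id
      {w : α | z ≤ w ∧ w ≤ z ⊔ m ∧ ¬ m ≤ w} (Set.toFinite _)
      ⟨z, le_refl z, le_sup_left, fun h => hc.2 (h.trans hzc)⟩
    obtain ⟨hzu, huzm, hmu⟩ := hu
    have hult : u < z ⊔ m := lt_of_le_of_ne huzm (fun h => hmu (h ▸ le_sup_right))
    -- a cover of u below z ⊔ m
    letI : LocallyFiniteOrder α := Fintype.toLocallyFiniteOrder
    obtain ⟨v, huv, hvzm⟩ := exists_covBy_le_of_lt hult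
    have hmv : m ≤ v := by
      by_contra hmv
      have : u = v := le_antisymm huv.le (humax ⟨le_trans hzu huv.le, hvzm, hmv⟩ huv.le)
      exact huv.lt.ne this
    have hvm : v ≠ m := by
      rintro rfl
      exact hzm (hzu.trans huv.le)
    have hzym : z ⊔ m ≤ y := sup_le hzy hmy
    have hvi : v < i := lt_of_le_of_lt (hvzm.trans hzym) hyi
    exact himin v ⟨hmv, hvm, u, ⟨le_trans hxmz hzu, hmu⟩, huv⟩ hvi
  refine ⟨z, hglb1, ?_⟩
  constructor
  · rintro a (rfl | rfl); exacts [hzc, by simpa using hzm]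
  · intro w hw
    exact hlbz w (hw (Set.mem_insert _ _)) (le_trans (hw (Set.mem_insert_of_mem _ rfl)) hmy)
end

section
/- Let L be a finite nearlattice whose minimal elements have pairwise common join m, let x_min be a minimal element, and suppose v ∈ ↑m \ {m} is an x_min-entry with x_min-anchor u (so u ∈ ↑x_min \ ↑m and u ≺ v). Then u ∨ m = v. -/
/-- If all distinct minimal elements of a finite nearlattice have common join `m`,
`x_min` is minimal, `v` is an `x_min`-entry and `u ∈ W(x_min)` is an
`x_min`-anchor of `v` (so `u ≺ v`), then `u ∨ m = v`. -/
theorem stmt16 {α : Type*} [SemilatticeSup α] [Fintype α] (m : α)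
    (hm : ∀ p q : α, IsMin p → IsMin q → p ≠ q → p ⊔ q = m)
    (xm : α) (hxm : IsMin xm) (u v : α)
    (hv : m ≤ v ∧ v ≠ m) (hu : xm ≤ u ∧ ¬ m ≤ u) (hcov : u ⋖ v) :
    u ⊔ m = v := by
  have hle : u ⊔ m ≤ v := sup_le hcov.1.le hv.1
  have hlt : u < u ⊔ m := lt_of_le_of_ne le_sup_left (fun h => hu.2 (h ▸ le_sup_right))
  rcases lt_or_eq_of_le hle with h | h
  · exact absurd h (hcov.2 hlt)
  · exact h
end

section
/- Let L be a finite nearlattice with exactly two minimal elements a_min and b_min, let m = a_min ∨ b_min, and suppose i is the unique b_min-entry (the unique element of ↑m \ {m} covering some element of the wing W(b_min) = ↑b_min \ ↑m). Then for every u ∈ W(b_min), u ∨ m ∈ {m, i}. -/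
/-- If a finite nearlattice has exactly two minimal elements `a`, `b` with
`m = a ⊔ b`, and `i` is the unique `b`-entry, then `u ∨ m ∈ {m, i}` for every
`u` in the wing of `b`. -/
theorem stmt17 {α : Type*} [SemilatticeSup α] [Fintype α] (a b m i : α)
    (hab : a ≠ b) (ha : IsMin a) (hb : IsMin b)
    (honly : ∀ x : α, IsMin x → x = a ∨ x = b)
    (hm : a ⊔ b = m)
    (hi : m ≤ i ∧ i ≠ m ∧ ∃ w, (b ≤ w ∧ ¬ m ≤ w) ∧ w ⋖ i)
    (huniq : ∀ v : α, (m ≤ v ∧ v ≠ m ∧ ∃ w, (b ≤ w ∧ ¬ m ≤ w) ∧ w ⋖ v) → v = i) :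
    ∀ u : α, b ≤ u → ¬ m ≤ u → u ⊔ m = m ∨ u ⊔ m = i := by
  intro u hbu hmu
  by_cases hum : u ≤ m
  · left; exact sup_eq_right.mpr hum
  · right
    classical
    -- find a maximal element of the wing between u and u ⊔ m
    have hne : (Finset.univ.filter (fun x => u ≤ x ∧ ¬ m ≤ x ∧ x ≤ u ⊔ m)).Nonempty :=
      ⟨u, by simp [hmu]⟩
    obtain ⟨w, hwS, hwmax⟩ : ∃ w ∈ Finset.univ.filter (fun x => u ≤ x ∧ ¬ m ≤ x ∧ x ≤ u ⊔ m),
        ∀ x ∈ Finset.univ.filter (fun x => u ≤ x ∧ ¬ m ≤ x ∧ x ≤ u ⊔ m), ¬ w < x := by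
      obtain ⟨w, hw⟩ := Finset.exists_maximal hne
      exact ⟨w, hw.prop, fun x hx hlt => not_le_of_gt hlt (hw.2 hx hlt.le)⟩
    simp only [Finset.mem_filter, Finset.mem_univ, true_and] at hwS
    obtain ⟨huw, hmw, hwle⟩ := hwS
    have hwlt : w < u ⊔ m := lt_of_le_of_ne hwle (fun h => hmw (h ▸ le_sup_right))
    have hcov : w ⋖ u ⊔ m := by
      refine ⟨hwlt, ?_⟩
      intro y hwy hylt
      by_cases hmy : m ≤ y
      · exact absurd (sup_le (le_trans huw hwy.le) hmy) (not_le_of_gt hylt)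
      · exact hwmax y (by simp [le_trans huw hwy.le, hmy, hylt.le]) hwy
    exact huniq (u ⊔ m) ⟨le_sup_right,
      fun h => hum (by simpa [h] using le_sup_left.trans h.le),
      w, ⟨hbu.trans huw, hmw⟩, hcov⟩
end

section
/- Let L be a finite nearlattice with exactly two minimal elements a_min and b_min, m = a_min ∨ b_min, and suppose i is the unique b_min-entry. Then W(b_min) ∪ {m, i} is a subnearlattice of L: it is closed under the join of L and under the partial meet of L (every meet of two of its elements that is defined in L belongs to the set). -/
/-- If a finite nearlattice has exactly two minimal elements `a`, `b` with
`m = a ⊔ b` and `i` is the unique `b`-entry, then `W(b) ∪ {m, i}` is a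
subnearlattice: nonempty, closed under joins and under all defined meets. -/
theorem stmt18 {α : Type*} [SemilatticeSup α] [Fintype α] (a b m i : α)
    (hab : a ≠ b) (ha : IsMin a) (hb : IsMin b)
    (honly : ∀ x : α, IsMin x → x = a ∨ x = b)
    (hm : a ⊔ b = m)
    (hi : m ≤ i ∧ i ≠ m ∧ ∃ w, (b ≤ w ∧ ¬ m ≤ w) ∧ w ⋖ i)
    (huniq : ∀ v : α, (m ≤ v ∧ v ≠ m ∧ ∃ w, (b ≤ w ∧ ¬ m ≤ w) ∧ w ⋖ v) → v = i) :
    ((Set.Ici b \ Set.Ici m) ∪ {m, i}).Nonempty ∧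
    (∀ x ∈ (Set.Ici b \ Set.Ici m) ∪ {m, i},
      ∀ y ∈ (Set.Ici b \ Set.Ici m) ∪ {m, i},
        x ⊔ y ∈ (Set.Ici b \ Set.Ici m) ∪ {m, i}) ∧
    (∀ x ∈ (Set.Ici b \ Set.Ici m) ∪ {m, i},
      ∀ y ∈ (Set.Ici b \ Set.Ici m) ∪ {m, i},
        ∀ z : α, IsGLB {x, y} z → z ∈ (Set.Ici b \ Set.Ici m) ∪ {m, i}) := by
  classical
  obtain ⟨him, hine, -⟩ := hi
  have hbm : b ≤ m := hm ▸ le_sup_right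
  have hbi : b ≤ i := hbm.trans him
  -- membership characterization
  have hmem : ∀ x : α, x ∈ (Set.Ici b \ Set.Ici m) ∪ {m, i} ↔
      ((b ≤ x ∧ ¬ m ≤ x) ∨ x = m ∨ x = i) := by
    intro x
    simp only [Set.mem_union, Set.mem_diff, Set.mem_Ici, Set.mem_insert_iff,
      Set.mem_singleton_iff]
  -- core lemma
  have key : ∀ w : α, b ≤ w → ¬ m ≤ w → ¬ w ≤ m →
      ∀ z : α, w ≤ z → m ≤ z → w ≤ i ∧ i ≤ z := by
    intro w hbw hmw hwm z hwz hmz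
    -- maximal wing element u with w ≤ u ≤ z
    set T : Finset α := Finset.univ.filter (fun u => b ≤ u ∧ ¬ m ≤ u ∧ w ≤ u ∧ u ≤ z) with hT
    have hwT : w ∈ T := by simp [hT, hbw, hmw, hwz]
    obtain ⟨u, huT, humax⟩ := T.exists_maximal ⟨w, hwT⟩
    simp only [hT, Finset.mem_filter, Finset.mem_univ, true_and] at huT
    obtain ⟨hbu, hmu, hwu, huz⟩ := huT
    have huz' : u < z := lt_of_le_of_ne huz (fun h => hmu (h ▸ hmz))
    -- minimal v with u < v ≤ z
    set V : Finset α := Finset.univ.filter (fun v => u < v ∧ v ≤ z) with hV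
    have hzV : z ∈ V := by simp [hV, huz']
    obtain ⟨v, hvV, hvmin⟩ := V.exists_minimal ⟨z, hzV⟩
    simp only [hV, Finset.mem_filter, Finset.mem_univ, true_and] at hvV
    obtain ⟨huv, hvz⟩ := hvV
    have hcov : u ⋖ v := by
      refine ⟨huv, fun t hut htv => ?_⟩
      exact lt_irrefl _ (htv.trans_le (hvmin (by simp [hV, hut, htv.le.trans hvz]) htv.le))
    have hmv : m ≤ v := by
      by_contra hmv
      exact lt_irrefl _ (huv.trans_le (humax (by simp [hT, hbu.trans huv.le, hmv, hwu.trans huv.le, hvz]) huv.le))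
    have hvm : v ≠ m := by
      rintro rfl
      exact hwm (hwu.trans huv.le)
    have hvi : v = i := huniq v ⟨hmv, hvm, u, ⟨hbu, hmu⟩, hcov⟩
    exact ⟨hwu.trans (hvi ▸ huv.le), hvi ▸ hvz⟩
  -- every wing element is ≤ i
  have wle : ∀ w : α, b ≤ w → ¬ m ≤ w → w ≤ i := by
    intro w hbw hmw
    by_cases hwm : w ≤ m
    · exact hwm.trans him
    · exact (key w hbw hmw hwm (w ⊔ m) le_sup_left le_sup_right).1
  refine ⟨⟨m, (hmem m).2 (Or.inr (Or.inl rfl))⟩, ?_, ?_⟩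
  · -- join closure
    intro x hx y hy
    rw [hmem] at hx hy ⊢
    -- helper for wing ⊔ wing
    have joinWW : ∀ w1 w2 : α, (b ≤ w1 ∧ ¬ m ≤ w1) → (b ≤ w2 ∧ ¬ m ≤ w2) →
        (b ≤ w1 ⊔ w2 ∧ ¬ m ≤ w1 ⊔ w2) ∨ w1 ⊔ w2 = m ∨ w1 ⊔ w2 = i := by
      intro w1 w2 ⟨hb1, hm1⟩ ⟨hb2, hm2⟩
      by_cases hmz : m ≤ w1 ⊔ w2
      · by_cases h1 : w1 ≤ m
        · by_cases h2 : w2 ≤ m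
          · exact Or.inr (Or.inl (le_antisymm (sup_le h1 h2) hmz))
          · refine Or.inr (Or.inr (le_antisymm (sup_le (wle w1 hb1 hm1) (wle w2 hb2 hm2))
              (key w2 hb2 hm2 h2 _ le_sup_right hmz).2))
        · refine Or.inr (Or.inr (le_antisymm (sup_le (wle w1 hb1 hm1) (wle w2 hb2 hm2))
            (key w1 hb1 hm1 h1 _ le_sup_left hmz).2))
      · exact Or.inl ⟨hb1.trans le_sup_left, hmz⟩
    have joinWM : ∀ w : α, (b ≤ w ∧ ¬ m ≤ w) →
        (b ≤ w ⊔ m ∧ ¬ m ≤ w ⊔ m) ∨ w ⊔ m = m ∨ w ⊔ m = i := by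
      intro w ⟨hbw, hmw⟩
      by_cases hwm : w ≤ m
      · exact Or.inr (Or.inl (sup_eq_right.2 hwm))
      · exact Or.inr (Or.inr (le_antisymm (sup_le (wle w hbw hmw) him)
          (key w hbw hmw hwm _ le_sup_left le_sup_right).2))
    rcases hx with hx | rfl | rfl <;> rcases hy with hy | rfl | rfl
    · exact joinWW x y hx hy
    · exact joinWM x hx
    · exact Or.inr (Or.inr (sup_eq_right.2 (wle x hx.1 hx.2)))
    · rw [sup_comm]; exact joinWM y hy
    · exact Or.inr (Or.inl (sup_idem _))
    · exact Or.inr (Or.inr (sup_eq_right.2 him))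
    · rw [sup_comm]; exact Or.inr (Or.inr (sup_eq_right.2 (wle y hy.1 hy.2)))
    · exact Or.inr (Or.inr (sup_eq_left.2 him))
    · exact Or.inr (Or.inr (sup_idem _))
  · -- meet closure
    intro x hx y hy z hz
    rw [hmem] at hx hy ⊢
    have hzx : z ≤ x := hz.1 (Set.mem_insert _ _)
    have hzy : z ≤ y := hz.1 (Set.mem_insert_of_mem _ rfl)
    have hble : ∀ t : α, ((b ≤ t ∧ ¬ m ≤ t) ∨ t = m ∨ t = i) → b ≤ t := by
      rintro t (ht | rfl | rfl)
      · exact ht.1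
      · exact hbm
      · exact hbi
    have hbz : b ≤ z := hz.2 (by
      rintro t (rfl | rfl)
      · exact hble _ hx
      · exact hble _ hy)
    rcases hx with hx | rfl | rfl
    · exact Or.inl ⟨hbz, fun h => hx.2 (h.trans hzx)⟩
    · rcases hy with hy | rfl | rfl
      · exact Or.inl ⟨hbz, fun h => hy.2 (h.trans hzy)⟩
      · exact Or.inr (Or.inl (le_antisymm hzx (hz.2 (by rintro t (rfl | rfl) <;> simp))))
      · refine Or.inr (Or.inl (le_antisymm hzx (hz.2 ?_)))
        rintro t (rfl | rfl)
        · exact le_rfl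
        · exact him
    · rcases hy with hy | rfl | rfl
      · exact Or.inl ⟨hbz, fun h => hy.2 (h.trans hzy)⟩
      · refine Or.inr (Or.inl (le_antisymm hzy (hz.2 ?_)))
        rintro t (rfl | rfl)
        · exact him
        · exact le_rfl
      · exact Or.inr (Or.inr (le_antisymm hzx (hz.2 (by rintro t (rfl | rfl) <;> simp))))
end

section
/- Let L and K be finite nearlattices on disjoint underlying sets, let 1_K be the top element of K, and let u ∈ L. Define an order on L ∪ (K \ {1_K}) by: x ≤ y iff (x,y ∈ L and x ≤_L y), or (x,y ∈ K \ {1_K} and x ≤_K y), or (x ∈ K \ {1_K}, y ∈ L, and u ≤_L y). Then this relation is a partial order and the resulting poset is a finite join-semilattice (hence a finite nearlattice). -/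
/-- The gluing order on `(K \ {1_K}) ⊕ L`: within each part the original order,
and every element of `K \ {1_K}` below every element of `↑u ⊆ L`. -/
def glueLe {L K : Type*} [Preorder L] [Preorder K] [OrderTop K] (u : L) :
    ({k : K // k ≠ ⊤} ⊕ L) → ({k : K // k ≠ ⊤} ⊕ L) → Prop
  | Sum.inl k, Sum.inl k' => (k : K) ≤ (k' : K)
  | Sum.inr a, Sum.inr b => a ≤ b
  | Sum.inl _, Sum.inr b => u ≤ b
  | Sum.inr _, Sum.inl _ => False

/-- Gluing a finite nearlattice `K` (minus its top) below the principal filter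
`↑u` of a finite nearlattice `L` yields a partial order that is a finite
join-semilattice (hence a finite nearlattice): every pair has a least upper
bound. -/
theorem stmt19 {L K : Type*} [SemilatticeSup L] [Fintype L]
    [SemilatticeSup K] [Fintype K] [OrderTop K] (u : L) :
    IsPartialOrder ({k : K // k ≠ ⊤} ⊕ L) (glueLe u) ∧
    ∀ x y : ({k : K // k ≠ ⊤} ⊕ L), ∃ s,
      glueLe u x s ∧ glueLe u y s ∧
        ∀ t, glueLe u x t → glueLe u y t → glueLe u s t := by
  constructor
  · exact
      { refl := by rintro (k | a) <;> simp [glueLe]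
        trans := by
          rintro (k | a) (k' | b) (k'' | c) h1 h2 <;>
            simp_all [glueLe] <;> exact le_trans h1 h2
        antisymm := by
          rintro (k | a) (k' | b) h1 h2 <;> simp_all [glueLe]
          · exact Subtype.ext (le_antisymm h1 h2)
          · exact le_antisymm h1 h2 }
  · rintro (k | a) (k' | b)
    · by_cases h : (k : K) ⊔ (k' : K) = ⊤
      · refine ⟨Sum.inr u, ?_, ?_, ?_⟩
        · simp [glueLe]
        · simp [glueLe]
        · rintro (j | c) h1 h2
          · have hle := sup_le h1 h2
            rw [h] at hle
            exact absurd (top_le_iff.mp hle) j.2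
          · exact h1
      · refine ⟨Sum.inl ⟨(k : K) ⊔ k', h⟩, le_sup_left, le_sup_right, ?_⟩
        rintro (j | c) h1 h2
        · exact sup_le h1 h2
        · exact h1
    · refine ⟨Sum.inr (u ⊔ b), ?_, ?_, ?_⟩
      · show u ≤ u ⊔ b; exact le_sup_left
      · exact le_sup_right
      · rintro (j | c) h1 h2
        · exact h2.elim
        · exact sup_le h1 h2
    · refine ⟨Sum.inr (a ⊔ u), ?_, ?_, ?_⟩
      · exact le_sup_left
      · show u ≤ a ⊔ u; exact le_sup_right
      · rintro (j | c) h1 h2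
        · exact h1.elim
        · exact sup_le h1 h2
    · refine ⟨Sum.inr (a ⊔ b), le_sup_left, le_sup_right, ?_⟩
      rintro (j | c) h1 h2
      · exact h1.elim
      · exact sup_le h1 h2
end
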